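/- Let I be an ideal of the free algebra k⟨X⟩ with respect to the graded lex order. Then the set of I-irreducible words is contained in the set B_I of lexicographically nondecreasing products of I-irreducible Lyndon words; moreover these two sets are equal if and only if every obstruction of I is a Lyndon word. -/

import Mathlib

/-- The lexicographic order of the paper: `u <_lex v` iff `v` is a proper prefix of `u`,
or `u = r ++ x :: s`, `v = r ++ y :: t` with letters `x < y`. -/
def PLt {X : Type*} [LinearOrder X] (u v : List X) : Prop :=
  (v <+: u ∧ v ≠ u) ∨
    ∃ (r s t : List X) (x y : X), x < y ∧ u = r ++ x :: s ∧ v = r ++ y :: t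

def PLe {X : Type*} [LinearOrder X] (u v : List X) : Prop := PLt u v ∨ u = v

/-- A nonempty word is Lyndon iff `u >_lex w ++ v` for every factorization `u = v ++ w`
with `v, w` nonempty. -/
def IsLyndon {X : Type*} [LinearOrder X] (u : List X) : Prop :=
  u ≠ [] ∧ ∀ v w : List X, u = v ++ w → v ≠ [] → w ≠ [] → PLt (w ++ v) u

/-- The graded lex order: compare first by degree, then by `<_lex`. -/
def GLt {X : Type*} [LinearOrder X] (deg : X → ℕ) (u v : List X) : Prop :=
  (u.map deg).sum < (v.map deg).sum ∨ ((u.map deg).sum = (v.map deg).sum ∧ PLt u v)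

/-- The free algebra `k⟨X⟩`, with the words on `X` as a basis. -/
abbrev FreeAlg (k X : Type*) [Field k] := MonoidAlgebra k (FreeMonoid X)

/-- `w` is the leading word of `f` with respect to the order `lt` on words. -/
def IsLeadingWord {k X : Type*} [Field k] (lt : FreeMonoid X → FreeMonoid X → Prop)
    (f : FreeAlg k X) (w : FreeMonoid X) : Prop :=
  w ∈ f.coeff.support ∧ ∀ u ∈ f.coeff.support, u ≠ w → lt u w

/-- A word is reducible with respect to a set `S ⊆ k⟨X⟩` if it is the leading word of a
nonzero element of `S`. -/
def Reducible {k X : Type*} [Field k] (lt : FreeMonoid X → FreeMonoid X → Prop)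
    (S : Set (FreeAlg k X)) (w : FreeMonoid X) : Prop :=
  ∃ f ∈ S, f ≠ 0 ∧ IsLeadingWord lt f w

/-- `v` is a factor of `u`. -/
def IsFactor {X : Type*} (v u : FreeMonoid X) : Prop := ∃ a b : FreeMonoid X, u = a * v * b

namespace CFL

variable {X : Type*} [LinearOrder X]

/-- standard lex order over the dual alphabet -/
def llt (u v : List X) : Prop := List.Lex (· > ·) u v

instance : IsStrictTotalOrder X (· > ·) where
  trichotomous a b := by
    intro h1 h2
    exact le_antisymm (not_lt.mp h1) (not_lt.mp h2)
  irrefl a := lt_irrefl a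
  trans a b c h1 h2 := lt_trans h2 h1

theorem llt_trans {u v w : List X} (h1 : llt u v) (h2 : llt v w) : llt u w :=
  by
  haveI : IsStrictTotalOrder (List X) (List.Lex (· > · : X → X → Prop)) :=
    { isStrictWeakOrder_of_isOrderConnected with }
  exact _root_.trans (r := List.Lex (· > · : X → X → Prop)) h1 h2

theorem llt_irrefl (u : List X) : ¬ llt u u := irrefl (r := List.Lex (· > · : X → X → Prop)) u

theorem llt_asymm {u v : List X} (h : llt u v) : ¬ llt v u := fun h' =>
  llt_irrefl u (llt_trans h h')

theorem llt_trichot (u v : List X) : llt u v ∨ u = v ∨ llt v u :=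
  trichotomous (r := List.Lex (· > · : X → X → Prop)) u v

theorem llt_append_right {u v : List X} (t : List X) (h : llt u v) : llt u (v ++ t) :=
  List.Lex.append_right _ t h

theorem llt_append_left {u v : List X} (s : List X) (h : llt u v) : llt (s ++ u) (s ++ v) :=
  List.Lex.append_left _ h s

theorem llt_cancel_left : ∀ (s : List X) {u v : List X}, llt (s ++ u) (s ++ v) → llt u v
  | [], _, _, h => h
  | a :: s, u, v, h => by
    rw [List.cons_append, List.cons_append] at h
    rcases List.lex_cons_iff.mp h with h'
    exact llt_cancel_left s h'

theorem llt_prefix {u : List X} : ∀ c : List X, c ≠ [] → llt u (u ++ c) := by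
  induction u with
  | nil => intro c hc; cases c with
    | nil => exact absurd rfl hc
    | cons a t => exact List.Lex.nil
  | cons a u ih => intro c hc; exact List.Lex.cons (ih c hc)

theorem lle_of_prefix {u v : List X} (h : u <+: v) : llt u v ∨ u = v := by
  obtain ⟨c, rfl⟩ := h
  cases c with
  | nil => exact Or.inr (by simp)
  | cons a t => exact Or.inl (llt_prefix _ (by simp))

/-- if `u < v` not by prefix, appending to `u` preserves the inequality -/
theorem llt_extend {u v : List X} (h : llt u v) (hp : ¬ u <+: v) (w : List X) :
    llt (u ++ w) v := by
  induction h with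
  | nil => exact absurd (List.nil_prefix) hp
  | @rel a b l1 l2 hab => exact List.Lex.rel hab
  | @cons a l1 l2 h ih =>
    refine List.Lex.cons (ih fun hpre => hp ?_)
    exact (List.prefix_append_right_inj [a]).mpr hpre

/-- strict inequality between equal-length lists is preserved by appending on the right -/
theorem llt_append_same {u v : List X} (h : llt u v) (hl : u.length = v.length)
    (c : List X) : llt (u ++ c) (v ++ c) := by
  induction h with
  | nil => simp at hl
  | @rel a b l1 l2 hab => exact List.Lex.rel hab
  | @cons a l1 l2 h ih => exact List.Lex.cons (ih (by simpa using hl))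


/-- Bridge between the paper's order and standard lex over the dual alphabet. -/
theorem PLt_iff_llt {u v : List X} : PLt u v ↔ llt v u := by
  constructor
  · rintro (⟨⟨c, rfl⟩, hne⟩ | ⟨r, s, t, x, y, hxy, rfl, rfl⟩)
    · exact llt_prefix c (fun h => hne (by simp [h]))
    · exact llt_append_left r (List.Lex.rel hxy)
  · intro h
    induction h with
    | @nil a l => exact Or.inl ⟨⟨a :: l, rfl⟩, by simp⟩
    | @rel a1 l1 a2 l2 hab => exact Or.inr ⟨[], l2, l1, a2, a1, hab, rfl, rfl⟩
    | @cons a l1 l2 h ih =>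
      rcases ih with ⟨⟨c, hc⟩, hne⟩ | ⟨r, s, t, x, y, hxy, h1, h2⟩
      · exact Or.inl ⟨⟨c, by rw [← hc]; rfl⟩, by simp [hc.symm] at hne ⊢; exact hne⟩
      · exact Or.inr ⟨a :: r, s, t, x, y, hxy, by simp [h1], by simp [h2]⟩

theorem PLe_iff {u v : List X} : PLe u v ↔ llt v u ∨ v = u := by
  unfold PLe
  rw [PLt_iff_llt]
  constructor
  · rintro (h | rfl); exacts [Or.inl h, Or.inr rfl]
  · rintro (h | rfl); exacts [Or.inl h, Or.inr rfl]

/-- The suffix characterization of Lyndon words (w.r.t. `llt`). -/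
def SLy (v : List X) : Prop :=
  v ≠ [] ∧ ∀ p s : List X, v = p ++ s → p ≠ [] → s ≠ [] → llt v s

theorem SLy_nonnil {v : List X} (h : SLy v) : v ≠ [] := h.1

/-- proper nonempty suffixes of a Lyndon word are greater -/
theorem SLy.suffix_lt {v : List X} (h : SLy v) {p s : List X} (hv : v = p ++ s)
    (hp : p ≠ []) (hs : s ≠ []) : llt v s := h.2 p s hv hp hs

theorem isLyndon_iff_SLy {v : List X} : IsLyndon v ↔ SLy v := by
  constructor
  · rintro ⟨hne, hrot⟩
    refine ⟨hne, fun p s hv hp hs => ?_⟩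
    have hps : llt v (s ++ p) := PLt_iff_llt.mp (hrot p s hv hp hs)
    rcases llt_trichot v s with h | h | h
    · exact h
    · exfalso
      apply hp
      have h1 : v.length = p.length + s.length := by rw [hv]; simp
      rw [h] at h1
      exact List.length_eq_zero_iff.mp (by omega)
    · -- s < v
      by_cases hpre : s <+: v
      · obtain ⟨r, hr⟩ := hpre
        have hrne : r ≠ [] := by
          rintro rfl
          rw [List.append_nil] at hr
          subst hr
          exact (llt_irrefl _) h
        have hrot2 : llt v (r ++ s) := PLt_iff_llt.mp (hrot s r hr.symm hs hrne)
        -- v = p ++ s = s ++ r, |p| = |r|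
        have hlen : p.length = r.length := by
          have h1 := congrArg List.length hv
          have h2 := congrArg List.length hr.symm
          simp at h1 h2; omega
        -- from v = s ++ r < s ++ p : r < p
        have h3 : llt r p := llt_cancel_left s (by rw [hr]; exact hps)
        -- from v = p ++ s < r ++ s : p < r
        have h4 : llt p r := by
          have h5 : llt (p ++ s) (r ++ s) := by rw [← hv]; exact hrot2
          rcases llt_trichot p r with h6 | h6 | h6
          · exact h6
          · subst h6; exact absurd h5 (llt_irrefl _)
          · exact absurd h5 (llt_asymm (llt_append_same h6 hlen.symm s))
        exact absurd h4 (llt_asymm h3)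
      · exact absurd hps (llt_asymm (llt_extend h hpre p))
  · rintro ⟨hne, hsuf⟩
    refine ⟨hne, fun p s hv hp hs => ?_⟩
    exact PLt_iff_llt.mpr (llt_append_right p (hsuf p s hv hp hs))


theorem SLy_singleton (x : X) : SLy [x] := by
  refine ⟨by simp, fun p s hv hp hs => ?_⟩
  rcases p with _ | ⟨a, p⟩
  · exact absurd rfl hp
  · rcases s with _ | ⟨b, t⟩
    · exact absurd rfl hs
    · exfalso
      have := congrArg List.length hv
      simp at this

/-- merging two Lyndon words `u < v` yields a Lyndon word -/
theorem SLy_merge {u v : List X} (hu : SLy u) (hv : SLy v) (huv : llt u v) :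
    SLy (u ++ v) := by
  have hunn := hu.1
  have hvnn := hv.1
  -- u is not a prefix of v or it is; in the non-prefix case u++w < v for all w
  have key : ∀ w : List X, llt (u ++ w) v ∨ (∃ t, t ≠ [] ∧ v = u ++ t) := by
    intro w
    by_cases hpre : u <+: v
    · obtain ⟨t, ht⟩ := hpre
      refine Or.inr ⟨t, ?_, ht.symm⟩
      rintro rfl
      rw [List.append_nil] at ht
      subst ht
      exact llt_irrefl _ huv
    · exact Or.inl (llt_extend huv hpre w)
  -- u ++ v < v
  have huvv : llt (u ++ v) v := by
    rcases key v with h | ⟨t, htne, htv⟩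
    · exact h
    · have h1 : llt v t := hv.suffix_lt htv hunn htne
      have h2 := llt_append_left (s := u) h1
      rwa [← htv] at h2
  refine ⟨by simp [hunn], fun p s hps hp hs => ?_⟩
  rcases List.append_eq_append_iff.mp hps.symm with ⟨c, hc1, hc2⟩ | ⟨a, ha1, ha2⟩
  · -- u = p ++ c, s = c ++ v : s straddles or equals v
    rcases eq_or_ne c [] with rfl | hcne
    · simp at hc2; rw [hc2]; exact huvv
    · -- c is a proper nonempty suffix of u
      have h1 : llt u c := hu.suffix_lt hc1 hp hcne
      have h2 : ¬ u <+: c := by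
        intro hpre
        have hl1 : u.length ≤ c.length := hpre.length_le
        have hl2 : u.length = p.length + c.length := by rw [hc1]; simp
        have hp' : 0 < p.length := List.length_pos_iff.mpr hp
        omega
      have h3 : llt (u ++ v) c := llt_extend h1 h2 v
      rw [hc2]
      exact llt_append_right v h3
  · -- p = u ++ a, v = a ++ s : s is a suffix of v
    by_cases hsv : s = v
    · rw [hsv]; exact huvv
    · have hanil : a ≠ [] := by rintro rfl; simp at ha2; exact hsv (by rw [ha2])
      exact llt_trans huvv (hv.suffix_lt ha2 hanil hs)


theorem chain'_violation {α : Type*} {R : α → α → Prop} :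
    ∀ {L : List α}, ¬ L.Chain' R → ∃ A a b B, L = A ++ a :: b :: B ∧ ¬ R a b := by
  intro L
  induction L with
  | nil => intro h; exact absurd List.isChain_nil h
  | cons a L ih =>
    intro h
    cases L with
    | nil => exact absurd (List.isChain_singleton a) h
    | cons b t =>
      simp only [List.Chain', List.isChain_cons_cons] at h
      by_cases hab : R a b
      · have h2 : ¬ (b :: t).Chain' R := fun hc => h ⟨hab, hc⟩
        obtain ⟨A, x, y, B, hL, hxy⟩ := ih h2
        exact ⟨a :: A, x, y, B, by rw [hL]; simp, hxy⟩
      · exact ⟨[], a, b, t, rfl, hab⟩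

theorem not_PLe {a b : List X} (h : ¬ PLe a b) : llt a b := by
  rcases llt_trichot a b with h1 | h1 | h1
  · exact h1
  · exact absurd (Or.inr h1) h
  · exact absurd (Or.inl (PLt_iff_llt.mpr h1)) h

theorem cfl_aux : ∀ (n : ℕ) (L : List (List X)), L.length ≤ n → (∀ l ∈ L, SLy l) →
    ∃ L' : List (List X), (∀ l ∈ L', SLy l) ∧ L'.Chain' PLe ∧ L'.flatten = L.flatten := by
  intro n
  induction n with
  | zero =>
    intro L hL _
    rw [Nat.le_zero, List.length_eq_zero_iff] at hL
    exact ⟨[], by simp, List.isChain_nil, by rw [hL]⟩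
  | succ n ih =>
    intro L hL hSLy
    by_cases hc : L.Chain' PLe
    · exact ⟨L, hSLy, hc, rfl⟩
    · obtain ⟨A, a, b, B, hLeq, hab⟩ := chain'_violation hc
      have hab' : llt a b := not_PLe hab
      have ha : SLy a := hSLy a (by rw [hLeq]; simp)
      have hb : SLy b := hSLy b (by rw [hLeq]; simp)
      have hm : SLy (a ++ b) := SLy_merge ha hb hab'
      have hlen : (A ++ (a ++ b) :: B).length ≤ n := by
        have := congrArg List.length hLeq
        simp at this ⊢
        omega
      have hS' : ∀ l ∈ A ++ (a ++ b) :: B, SLy l := by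
        intro l hl
        rcases List.mem_append.mp hl with h | h
        · exact hSLy l (by rw [hLeq]; exact List.mem_append.mpr (Or.inl h))
        · rcases List.mem_cons.mp h with rfl | h
          · exact hm
          · exact hSLy l (by rw [hLeq]; simp [h])
      obtain ⟨L', h1, h2, h3⟩ := ih _ hlen hS'
      refine ⟨L', h1, h2, ?_⟩
      rw [h3, hLeq]
      simp

theorem flatten_map_singleton {α : Type*} (w : List α) :
    (w.map (fun x => [x])).flatten = w := by
  induction w with
  | nil => rfl
  | cons x t ih => simp [ih]

theorem cfl_exists (w : List X) :
    ∃ L : List (List X), (∀ l ∈ L, SLy l) ∧ L.Chain' PLe ∧ L.flatten = w := by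
  obtain ⟨L, h1, h2, h3⟩ := cfl_aux (w.map (fun x => [x])).length (w.map (fun x => [x]))
    le_rfl (by rintro l hl; simp at hl; obtain ⟨x, _, rfl⟩ := hl; exact SLy_singleton x)
  refine ⟨L, h1, h2, ?_⟩
  rw [h3]
  exact flatten_map_singleton w


instance : IsTrans (List X) (@PLe X _) where
  trans a b c hab hbc := by
    rcases PLe_iff.mp hab with h1 | h1 <;> rcases PLe_iff.mp hbc with h2 | h2
    · exact PLe_iff.mpr (Or.inl (llt_trans h2 h1))
    · exact PLe_iff.mpr (Or.inl (h2 ▸ h1))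
    · exact PLe_iff.mpr (Or.inl (h1 ▸ h2))
    · exact PLe_iff.mpr (Or.inr (h2.trans h1))

/-- Key lemma: a proper nonempty suffix `t` of a Lyndon word `v` cannot be a prefix of a
concatenation of words all `llt`-smaller than `v`. -/
theorem lemB : ∀ (M : List (List X)) (t : List X) {v : List X}, SLy v →
    (∀ m ∈ M, llt m v) → t ≠ [] → (∃ p, p ≠ [] ∧ v = p ++ t) → t <+: M.flatten → False := by
  intro M
  induction M with
  | nil =>
    intro t v _ _ htne _ hpre
    simp only [List.flatten_nil, List.prefix_nil] at hpre
    exact htne hpre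
  | cons m M ih =>
    intro t v hv hm htne ⟨p, hpne, hvpt⟩ hpre
    have hvt : llt v t := hv.suffix_lt hvpt hpne htne
    rw [List.flatten_cons] at hpre
    by_cases hlen : t.length ≤ m.length
    · have htm : t <+: m := List.prefix_of_prefix_length_le hpre (List.prefix_append m M.flatten) hlen
      have h1 : llt t v ∨ t = v := by
        rcases lle_of_prefix htm with h | h
        · exact Or.inl (llt_trans h (hm m (by simp)))
        · exact Or.inl (h ▸ hm m (by simp))
      rcases h1 with h | h
      · exact llt_asymm hvt h
      · rw [h] at hvt; exact llt_irrefl _ hvt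
    · push_neg at hlen
      have hmt : m <+: t := List.prefix_of_prefix_length_le (List.prefix_append m M.flatten) hpre hlen.le
      obtain ⟨t', rfl⟩ := hmt
      have ht'ne : t' ≠ [] := by
        rintro rfl
        simp at hlen
      have ht'pre : t' <+: M.flatten := by
        obtain ⟨z, hz⟩ := hpre
        rw [List.append_assoc] at hz
        exact ⟨z, (List.append_cancel_left hz)⟩
      exact ih t' hv (fun x hx => hm x (by simp [hx])) ht'ne
        ⟨p ++ m, by simp [hpne], by rw [hvpt, List.append_assoc]⟩ ht'pre

/-- A Lyndon factor of a nonincreasing concatenation of Lyndon words is a factor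
of one of them. -/
theorem lyndon_factor : ∀ (L : List (List X)), (∀ l ∈ L, SLy l) → L.Pairwise PLe →
    ∀ {v a b : List X}, SLy v → a ++ v ++ b = L.flatten →
    ∃ l ∈ L, ∃ a' b' : List X, a' ++ v ++ b' = l := by
  intro L
  induction L with
  | nil =>
    intro _ _ v a b hv heq
    exfalso
    apply hv.1
    simp only [List.flatten_nil] at heq
    have h1 := List.append_eq_nil_iff.mp heq
    exact (List.append_eq_nil_iff.mp h1.1).2
  | cons l L ih =>
    intro hS hP v a b hv heq
    rw [List.flatten_cons, List.append_assoc] at heq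
    -- a ++ (v ++ b) = l ++ L.flatten
    rcases List.append_eq_append_iff.mp heq with ⟨a', ha1, ha2⟩ | ⟨c, hc1, hc2⟩
    · -- l = a ++ a', v ++ b = a' ++ L.flatten
      rcases eq_or_ne a' [] with rfl | ha'ne
      · -- v starts exactly at the boundary: v is a factor of L.flatten
        simp only [List.nil_append] at ha2
        obtain ⟨l', hl', hf⟩ := ih (fun x hx => hS x (by simp [hx])) hP.tail (a := []) (b := b) hv
          (by simpa using ha2)
        exact ⟨l', by simp [hl'], hf⟩
      · rcases List.append_eq_append_iff.mp ha2.symm with ⟨d, hd1, hd2⟩ | ⟨t, ht1, ht2⟩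
        · -- v = a' ++ d
          rcases eq_or_ne d [] with rfl | hdne
          · -- v = a' is a suffix of l
            simp only [List.append_nil] at hd1
            exact ⟨l, by simp, a, [], by rw [ha1, hd1]; simp⟩
          · -- v straddles: a' nonempty suffix of l, d nonempty prefix of L.flatten
            exfalso
            have hlmem : SLy l := hS l (by simp)
            have hlv : llt l v := by
              rcases eq_or_ne a [] with rfl | hane
              · simp only [List.nil_append] at ha1
                rw [hd1, ← ha1]
                exact llt_prefix d hdne
              · have h1 : llt l a' := hlmem.suffix_lt ha1 hane ha'ne
                rw [hd1]
                exact llt_append_right d h1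
            have hmv : ∀ m ∈ L, llt m v := by
              intro m hm
              have h2 : PLe l m := List.rel_of_pairwise_cons hP hm
              rcases PLe_iff.mp h2 with h3 | h3
              · exact llt_trans h3 hlv
              · exact h3 ▸ hlv
            exact lemB L d hv hmv hdne ⟨a', ha'ne, hd1⟩ ⟨b, hd2.symm⟩
        · -- a' = v ++ t : v is a factor of l
          exact ⟨l, by simp, a, t, by rw [ha1, ht1]; simp [List.append_assoc]⟩
    · -- a = l ++ c : v is a factor of L.flatten
      obtain ⟨l', hl', hf⟩ := ih (fun x hx => hS x (by simp [hx])) hP.tail (a := c) (b := b) hv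
        (by rw [List.append_assoc]; exact hc2.symm)
      exact ⟨l', by simp [hl'], hf⟩


section Graded

variable {deg : X → ℕ}

theorem degsum_pos (hdeg : ∀ x, 0 < deg x) {c : List X} (hc : c ≠ []) :
    0 < (c.map deg).sum := by
  cases c with
  | nil => exact absurd rfl hc
  | cons x t =>
    have := hdeg x
    simp only [List.map_cons, List.sum_cons]
    omega

/-- The graded lex order is a monomial order. -/
theorem GLt_mul (hdeg : ∀ x, 0 < deg x) {u v : List X} (h : GLt deg u v) (a b : List X) :
    GLt deg (a ++ u ++ b) (a ++ v ++ b) := by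
  rcases h with h | ⟨hdu, hP⟩
  · left
    simp only [List.map_append, List.sum_append]
    omega
  · right
    refine ⟨by simp [List.map_append, List.sum_append, hdu], ?_⟩
    rcases hP with ⟨⟨c, hc⟩, hne⟩ | ⟨r, s', t, x, y, hxy, h1, h2⟩
    · exfalso
      have hcne : c ≠ [] := by rintro rfl; simp at hc; exact hne hc
      have : ((v ++ c).map deg).sum = (v.map deg).sum + (c.map deg).sum := by
        simp [List.map_append, List.sum_append]
      rw [hc] at this
      have := degsum_pos hdeg hcne
      omega
    · exact Or.inr ⟨a ++ r, s' ++ b, t ++ b, x, y, hxy,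
        by rw [h1]; simp [List.append_assoc],
        by rw [h2]; simp [List.append_assoc]⟩

end Graded

end CFL

section Algebra

open FreeMonoid in
theorem toList_mul3 {X : Type*} (a v b : FreeMonoid X) :
    FreeMonoid.toList (a * v * b) = toList a ++ toList v ++ toList b := rfl

variable {k X : Type*} [Field k] [LinearOrder X] {deg : X → ℕ}

/-- reducibility propagates from factors to words -/
theorem reducible_of_factor (hdeg : ∀ x, 0 < deg x) (I : TwoSidedIdeal (FreeAlg k X))
    {v w : FreeMonoid X} (hf : IsFactor v w)
    (hred : Reducible (fun u v => GLt deg (FreeMonoid.toList u) (FreeMonoid.toList v))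
      (I : Set (FreeAlg k X)) v) :
    Reducible (fun u v => GLt deg (FreeMonoid.toList u) (FreeMonoid.toList v))
      (I : Set (FreeAlg k X)) w := by
  obtain ⟨a, b, rfl⟩ := hf
  obtain ⟨f, hfI, hf0, hvs, hlead⟩ := hred
  classical
  set g : FreeAlg k X := MonoidAlgebra.single a 1 * f * MonoidAlgebra.single b 1 with hg
  have hgI : g ∈ (I : Set (FreeAlg k X)) := by
    exact I.mul_mem_right _ _ (I.mul_mem_left _ _ hfI)
  have hs1 : (MonoidAlgebra.single a (1:k) * f).coeff.support
      = f.coeff.support.map (mulLeftEmbedding a) :=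
    MonoidAlgebra.support_single_mul f 1 (by simp) a
  have hs2 : g.coeff.support = (MonoidAlgebra.single a (1:k) * f).coeff.support.map (mulRightEmbedding b) :=
    MonoidAlgebra.support_mul_single _ 1 (by simp) b
  have hmem : ∀ x : FreeMonoid X, x ∈ g.coeff.support ↔ ∃ u ∈ f.coeff.support, a * u * b = x := by
    intro x
    rw [hs2, hs1]
    simp only [Finset.mem_map, mulLeftEmbedding_apply, mulRightEmbedding_apply]
    constructor
    · rintro ⟨y, ⟨u, hu, rfl⟩, rfl⟩; exact ⟨u, hu, rfl⟩
    · rintro ⟨u, hu, rfl⟩; exact ⟨a * u, ⟨u, hu, rfl⟩, rfl⟩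
  have hwmem : a * v * b ∈ g.coeff.support := (hmem _).mpr ⟨v, hvs, rfl⟩
  refine ⟨g, hgI, ?_, hwmem, ?_⟩
  · intro h0
    rw [h0] at hwmem
    simp at hwmem
  · intro x hx hne
    obtain ⟨u, hu, rfl⟩ := (hmem x).mp hx
    have huv : u ≠ v := by rintro rfl; exact hne rfl
    have := hlead u hu huv
    rw [toList_mul3, toList_mul3]
    exact CFL.GLt_mul hdeg this _ _

theorem isFactor_trans {X : Type*} {a b c : FreeMonoid X} (h1 : IsFactor a b)
    (h2 : IsFactor b c) : IsFactor a c := by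
  obtain ⟨x, y, rfl⟩ := h1
  obtain ⟨z, w, rfl⟩ := h2
  exact ⟨z * x, y * w, by simp [mul_assoc]⟩

theorem isFactor_length_lt {X : Type*} {v w : FreeMonoid X} (h : IsFactor v w) (hne : v ≠ w) :
    (FreeMonoid.toList v).length < (FreeMonoid.toList w).length := by
  obtain ⟨a, b, rfl⟩ := h
  rw [toList_mul3]
  simp only [List.length_append]
  rcases Nat.eq_zero_or_pos ((FreeMonoid.toList a).length + (FreeMonoid.toList b).length)
    with h0 | h0
  · exfalso
    apply hne
    have ha : FreeMonoid.toList a = [] := List.length_eq_zero_iff.mp (by omega)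
    have hb : FreeMonoid.toList b = [] := List.length_eq_zero_iff.mp (by omega)
    have ha' : a = 1 := by rw [← FreeMonoid.ofList_toList a, ha]; rfl
    have hb' : b = 1 := by rw [← FreeMonoid.ofList_toList b, hb]; rfl
    rw [ha', hb', one_mul, mul_one]
  · omega

/-- every reducible word contains an obstruction as a factor -/
theorem obstruction_exists (Red : FreeMonoid X → Prop) :
    ∀ (n : ℕ) (w : FreeMonoid X), (FreeMonoid.toList w).length ≤ n → Red w →
    ∃ o, IsFactor o w ∧ Red o ∧ ∀ o', IsFactor o' o → o' ≠ o → ¬ Red o' := by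
  intro n
  induction n with
  | zero =>
    intro w _ hred
    refine ⟨w, ⟨1, 1, by simp⟩, hred, fun o' hfac hne _ => ?_⟩
    have := isFactor_length_lt hfac hne
    omega
  | succ n ih =>
    intro w hw hred
    by_cases h : ∃ o', IsFactor o' w ∧ o' ≠ w ∧ Red o'
    · obtain ⟨o', hfac, hne, hro⟩ := h
      have hlen : (FreeMonoid.toList o').length ≤ n := by
        have := isFactor_length_lt hfac hne
        omega
      obtain ⟨o, h1, h2, h3⟩ := ih o' hlen hro
      exact ⟨o, isFactor_trans h1 hfac, h2, h3⟩
    · push_neg at h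
      refine ⟨w, ⟨1, 1, by simp⟩, hred, fun o' hfac hne hro => h o' hfac hne hro⟩

end Algebra


section Main

variable {k X : Type*} [Field k] [LinearOrder X] (deg : X → ℕ)
  (hdeg : ∀ x, 0 < deg x) (I : TwoSidedIdeal (FreeAlg k X))

local notation "Red" => Reducible
  (fun u v => GLt deg (FreeMonoid.toList u) (FreeMonoid.toList v)) (I : Set (FreeAlg k X))

theorem factor_of_mem_flatten {X : Type*} {v : List X} {L : List (List X)} (hv : v ∈ L)
    {w : FreeMonoid X} (hF : L.flatten = FreeMonoid.toList w) :
    IsFactor (FreeMonoid.ofList v) w := by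
  obtain ⟨A, B, hAB⟩ := List.append_of_mem hv
  refine ⟨FreeMonoid.ofList A.flatten, FreeMonoid.ofList B.flatten, ?_⟩
  have h1 : FreeMonoid.toList w = (A.flatten ++ v) ++ B.flatten := by
    rw [← hF, hAB]
    simp [List.flatten_append, List.append_assoc]
  rw [← FreeMonoid.ofList_toList w, h1, FreeMonoid.ofList_append, FreeMonoid.ofList_append]

theorem proper_of_two_blocks {α : Type*} {A B : List (List α)} {v : List α}
    (hne2 : 2 ≤ (A ++ v :: B).length) (hnonnil : ∀ l ∈ A ++ v :: B, l ≠ []) :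
    v.length < (A ++ v :: B).flatten.length := by
  have h : 0 < A.flatten.length + B.flatten.length := by
    rcases A with _ | ⟨a0, A'⟩
    · rcases B with _ | ⟨b0, B'⟩
      · simp at hne2
      · have h1 : b0 ≠ [] := hnonnil b0 (by simp)
        have h2 : 0 < b0.length := List.length_pos_iff.mpr h1
        simp only [List.flatten_cons, List.length_append, List.flatten_nil, List.length_nil]
        omega
    · have h1 : a0 ≠ [] := hnonnil a0 (by simp)
      have h2 : 0 < a0.length := List.length_pos_iff.mpr h1
      simp only [List.flatten_cons, List.flatten_append, List.length_append]
      omega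
  simp only [List.flatten_append, List.flatten_cons, List.length_append]
  omega

include hdeg in
theorem part1 : ∀ w : FreeMonoid X, ¬ Red w →
    ∃ L : List (List X), (∀ v ∈ L, IsLyndon v ∧ ¬ Red (FreeMonoid.ofList v)) ∧
      L.Chain' PLe ∧ L.flatten = FreeMonoid.toList w := by
  intro w hw
  obtain ⟨L, hS, hC, hF⟩ := CFL.cfl_exists (FreeMonoid.toList w)
  refine ⟨L, fun v hv => ⟨CFL.isLyndon_iff_SLy.mpr (hS v hv), fun hred => hw ?_⟩, hC, hF⟩
  exact reducible_of_factor hdeg I (factor_of_mem_flatten hv hF) hred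

include hdeg in
theorem part2_mp
    (hEq : {w : FreeMonoid X | ¬ Red w} = {w : FreeMonoid X | ∃ L : List (List X),
      (∀ v ∈ L, IsLyndon v ∧ ¬ Red (FreeMonoid.ofList v)) ∧
        L.Chain' PLe ∧ L.flatten = FreeMonoid.toList w}) :
    ∀ o : FreeMonoid X, (Red o ∧ ∀ o' : FreeMonoid X, IsFactor o' o → o' ≠ o → ¬ Red o') →
      IsLyndon (FreeMonoid.toList o) := by
  rintro o ⟨hro, hobs⟩
  obtain ⟨L, hS, hC, hF⟩ := CFL.cfl_exists (FreeMonoid.toList o)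
  rcases L with _ | ⟨l, L'⟩
  · exfalso
    have hmem : o ∈ {w : FreeMonoid X | ∃ L : List (List X),
        (∀ v ∈ L, IsLyndon v ∧ ¬ Red (FreeMonoid.ofList v)) ∧
          L.Chain' PLe ∧ L.flatten = FreeMonoid.toList w} :=
      ⟨[], by simp, List.isChain_nil, hF⟩
    rw [← hEq] at hmem
    exact hmem hro
  · rcases L' with _ | ⟨l2, L''⟩
    · have h1 : l = FreeMonoid.toList o := by simpa using hF
      exact h1 ▸ CFL.isLyndon_iff_SLy.mpr (hS l (by simp))
    · exfalso
      have hmem : o ∈ {w : FreeMonoid X | ∃ L : List (List X),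
          (∀ v ∈ L, IsLyndon v ∧ ¬ Red (FreeMonoid.ofList v)) ∧
            L.Chain' PLe ∧ L.flatten = FreeMonoid.toList w} := by
        refine ⟨l :: l2 :: L'', fun v hv => ⟨CFL.isLyndon_iff_SLy.mpr (hS v hv), ?_⟩, hC, hF⟩
        refine hobs (FreeMonoid.ofList v) (factor_of_mem_flatten hv hF) ?_
        intro heq
        obtain ⟨A, B, hAB⟩ := List.append_of_mem hv
        have hlt : v.length < (l :: l2 :: L'').flatten.length := by
          rw [hAB]
          refine proper_of_two_blocks ?_ ?_
          · rw [← hAB]; simp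
          · rw [← hAB]
            intro x hx
            exact (CFL.isLyndon_iff_SLy.mpr (hS x hx)).1
        rw [hF] at hlt
        have hvo : v = FreeMonoid.toList o := by rw [← heq]; rfl
        rw [← hvo] at hlt
        exact lt_irrefl _ hlt
      rw [← hEq] at hmem
      exact hmem hro

include hdeg in
theorem part2_mpr
    (hOb : ∀ o : FreeMonoid X, (Red o ∧ ∀ o' : FreeMonoid X, IsFactor o' o → o' ≠ o →
        ¬ Red o') → IsLyndon (FreeMonoid.toList o)) :
    {w : FreeMonoid X | ¬ Red w} = {w : FreeMonoid X | ∃ L : List (List X),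
      (∀ v ∈ L, IsLyndon v ∧ ¬ Red (FreeMonoid.ofList v)) ∧
        L.Chain' PLe ∧ L.flatten = FreeMonoid.toList w} := by
  apply Set.eq_of_subset_of_subset
  · intro w hw
    exact part1 deg hdeg I w hw
  · rintro w ⟨L, hN, hC, hF⟩
    intro hred
    obtain ⟨o, hfac, hro, hmin⟩ := obstruction_exists
      (Reducible (fun u v => GLt deg (FreeMonoid.toList u) (FreeMonoid.toList v))
        (I : Set (FreeAlg k X))) (FreeMonoid.toList w).length w le_rfl hred
    have hSo : CFL.SLy (FreeMonoid.toList o) :=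
      CFL.isLyndon_iff_SLy.mp (hOb o ⟨hro, hmin⟩)
    obtain ⟨a, b, hw'⟩ := hfac
    have heq : FreeMonoid.toList a ++ FreeMonoid.toList o ++ FreeMonoid.toList b
        = L.flatten := by
      rw [hF, hw', toList_mul3]
    obtain ⟨l, hl, a', b', hfac'⟩ := CFL.lyndon_factor L
      (fun x hx => CFL.isLyndon_iff_SLy.mp (hN x hx).1)
      (List.isChain_iff_pairwise.mp hC) hSo heq
    apply (hN l hl).2
    refine reducible_of_factor hdeg I ⟨FreeMonoid.ofList a', FreeMonoid.ofList b', ?_⟩ hro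
    rw [← FreeMonoid.ofList_toList (FreeMonoid.ofList l)]
    rw [FreeMonoid.toList_ofList, ← hfac', FreeMonoid.ofList_append, FreeMonoid.ofList_append]
    rfl

end Main

/-- The set of `I`-irreducible words is contained in the set `B_I` of lexicographically
nondecreasing products of `I`-irreducible Lyndon words, and the two sets are equal iff
every obstruction of `I` is a Lyndon word. Here leading words are taken with respect to
the graded lex order. -/
theorem irreducible_subset_BI {k X : Type*} [Field k] [LinearOrder X]
    (deg : X → ℕ) (hdeg : ∀ x, 0 < deg x)
    (I : TwoSidedIdeal (FreeAlg k X)) :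
    letI glt : FreeMonoid X → FreeMonoid X → Prop :=
      fun u v => GLt deg (FreeMonoid.toList u) (FreeMonoid.toList v)
    letI Irr : FreeMonoid X → Prop := fun w => ¬ Reducible glt (I : Set (FreeAlg k X)) w
    letI NI : Set (List X) := {v | IsLyndon v ∧ Irr (FreeMonoid.ofList v)}
    letI BI : Set (FreeMonoid X) := {w | ∃ L : List (List X),
      (∀ v ∈ L, v ∈ NI) ∧ L.Chain' PLe ∧ L.flatten = FreeMonoid.toList w}
    {w : FreeMonoid X | Irr w} ⊆ BI ∧
      ({w : FreeMonoid X | Irr w} = BI ↔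
        ∀ o : FreeMonoid X, (Reducible glt (I : Set (FreeAlg k X)) o ∧
            ∀ o' : FreeMonoid X, IsFactor o' o → o' ≠ o →
              ¬ Reducible glt (I : Set (FreeAlg k X)) o') →
          IsLyndon (FreeMonoid.toList o)) := by
  exact ⟨fun w hw => part1 deg hdeg I w hw,
    fun hEq => part2_mp deg hdeg I hEq, fun hOb => part2_mpr deg hdeg I hOb⟩
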